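/- Fix positive integers n, d, L. The number of (d,L)-cylindric standard Young tableaux of size n equals the number of (L,d)-cylindric standard Young tableaux of size n. -/

import Mathlib

open Finset

/-- number of `m ≥ 0` with `a - m*L > c`, i.e. `⌈(a-c)/L⌉`. -/
def csytP (L a c : ℕ) : ℕ := (a - c + (L - 1)) / L

lemma csytP_zero (L c : ℕ) : csytP L 0 c = 0 := by
  unfold csytP
  rcases Nat.eq_zero_or_pos L with h | h
  · simp [h]
  · rw [Nat.zero_sub, Nat.zero_add, Nat.div_eq_of_lt (by omega)]

lemma csytP_anti (L a : ℕ) {c c' : ℕ} (h : c ≤ c') : csytP L a c' ≤ csytP L a c :=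
  Nat.div_le_div_right (by omega)

lemma csytP_mono (L c : ℕ) {a a' : ℕ} (h : a ≤ a') : csytP L a c ≤ csytP L a' c :=
  Nat.div_le_div_right (by omega)

lemma csytP_cyl (hL : 0 < L) (a : ℕ) : csytP L a 0 ≤ csytP L a (L - 1) + 1 := by
  unfold csytP
  have h1 : a - 0 + (L - 1) ≤ (a - (L-1) + (L-1)) + L := by omega
  calc (a - 0 + (L - 1)) / L ≤ ((a - (L-1) + (L-1)) + L) / L := Nat.div_le_div_right h1
    _ = (a - (L-1) + (L-1)) / L + 1 := Nat.add_div_right _ hL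

lemma sum_add_div (hL : 0 < L) (a : ℕ) : ∑ c ∈ range L, (a + c) / L = a := by
  induction a with
  | zero =>
    apply Finset.sum_eq_zero
    intro c hc
    simp only [Finset.mem_range] at hc
    simpa using Nat.div_eq_of_lt hc
  | succ a ih =>
    have h1 : ∑ c ∈ range (L+1), (a + c) / L = (∑ c ∈ range L, (a + (c+1))/L) + (a + 0)/L :=
      Finset.sum_range_succ' _ _
    have h2 : ∑ c ∈ range (L+1), (a + c) / L = (∑ c ∈ range L, (a + c)/L) + (a + L)/L :=
      Finset.sum_range_succ _ _
    have h3 : (a + L)/L = a/L + 1 := Nat.add_div_right _ hL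
    have h4 : ∑ c ∈ range L, (a + (c+1))/L = ∑ c ∈ range L, ((a+1) + c)/L := by
      apply Finset.sum_congr rfl; intro c _; congr 1; omega
    rw [h4] at h1
    simp only [Nat.add_zero] at h1
    omega

lemma csytP_hermite (hL : 0 < L) (a : ℕ) : ∑ c ∈ range L, csytP L a c = a := by
  have h : ∀ c ∈ range L, csytP L a c = (a + (L - 1 - c)) / L := by
    intro c hc
    simp only [Finset.mem_range] at hc
    unfold csytP
    rcases le_or_gt c a with h | h
    · congr 1; omega
    · rw [Nat.div_eq_of_lt (by omega), Nat.div_eq_of_lt (by omega)]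
  rw [Finset.sum_congr rfl h]
  have := Finset.sum_range_reflect (fun c => (a + c) / L) L
  rw [show (fun c => (a + (L - 1 - c))/L) = fun c => (a + (L-1-c))/L from rfl]
  calc ∑ c ∈ range L, (a + (L - 1 - c)) / L = ∑ c ∈ range L, (a + c) / L := by
        rw [← Finset.sum_range_reflect (fun c => (a + c) / L) L]
    _ = a := sum_add_div hL a

def csytExt (d L : ℕ) (hd : 0 < d) (lam : Fin d → ℕ) (k : ℕ) : ℤ :=
  (lam ⟨k % d, Nat.mod_lt k hd⟩ : ℤ) - (L : ℤ) * (k / d)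

lemma csytExt_eq (d L : ℕ) (hd : 0 < d) (lam : Fin d → ℕ) (k r q : ℕ)
    (hr : k % d = r) (hq : k / d = q) (h : r < d) :
    csytExt d L hd lam k = (lam ⟨r, h⟩ : ℤ) - (L : ℤ) * q := by
  unfold csytExt
  subst hr hq
  rfl

lemma csytExt_small (d L : ℕ) (hd : 0 < d) (lam : Fin d → ℕ) (j : Fin d) :
    csytExt d L hd lam (j : ℕ) = (lam j : ℤ) := by
  rw [csytExt_eq d L hd lam j j 0 (Nat.mod_eq_of_lt j.isLt) (Nat.div_eq_of_lt j.isLt) j.isLt]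
  simp [Fin.eta]

lemma csytExt_add_d (d L : ℕ) (hd : 0 < d) (lam : Fin d → ℕ) (k : ℕ) :
    csytExt d L hd lam (k + d) = csytExt d L hd lam k - L := by
  rw [csytExt_eq d L hd lam (k + d) (k % d) (k / d + 1) (Nat.add_mod_right k d)
    (Nat.add_div_right k hd) (Nat.mod_lt k hd),
    csytExt_eq d L hd lam k (k % d) (k / d) rfl rfl (Nat.mod_lt k hd)]
  push_cast
  ring

lemma csytExt_anti (d L : ℕ) (hd : 0 < d) (lam : Fin d → ℕ) (hanti : Antitone lam)
    (hcyl : lam ⟨0, hd⟩ ≤ lam ⟨d - 1, Nat.sub_lt hd Nat.one_pos⟩ + L) :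
    Antitone (csytExt d L hd lam) := by
  apply antitone_nat_of_succ_le
  intro k
  have hdm := Nat.div_add_mod k d
  have hrd : k % d < d := Nat.mod_lt k hd
  rcases lt_or_ge (k % d + 1) d with h | h
  · have hk1 : k + 1 = (k % d + 1) + d * (k / d) := by omega
    have hm : (k + 1) % d = k % d + 1 := by
      rw [hk1, Nat.add_mul_mod_self_left, Nat.mod_eq_of_lt h]
    have hdv : (k + 1) / d = k / d := by
      rw [hk1, Nat.add_mul_div_left _ _ hd, Nat.div_eq_of_lt h]
      omega
    rw [csytExt_eq d L hd lam (k + 1) (k % d + 1) (k / d) hm hdv h,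
      csytExt_eq d L hd lam k (k % d) (k / d) rfl rfl hrd]
    have hle : lam ⟨k % d + 1, h⟩ ≤ lam ⟨k % d, hrd⟩ := hanti (by simp [Fin.le_def])
    have hle' : (lam ⟨k % d + 1, h⟩ : ℤ) ≤ (lam ⟨k % d, hrd⟩ : ℤ) := by exact_mod_cast hle
    omega
  · have hmul : d * (k / d + 1) = d * (k / d) + d := by ring
    have hk1 : k + 1 = 0 + d * (k / d + 1) := by omega
    have hm : (k + 1) % d = 0 := by rw [hk1, Nat.add_mul_mod_self_left, Nat.zero_mod]
    have hdv : (k + 1) / d = k / d + 1 := by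
      rw [hk1, Nat.add_mul_div_left _ _ hd, Nat.zero_div]
      omega
    rw [csytExt_eq d L hd lam (k + 1) 0 (k / d + 1) hm hdv hd,
      csytExt_eq d L hd lam k (k % d) (k / d) rfl rfl hrd]
    have he : (⟨k % d, hrd⟩ : Fin d) = ⟨d - 1, Nat.sub_lt hd Nat.one_pos⟩ := by
      apply Fin.ext; simp; omega
    rw [he]
    have h2 : (lam ⟨0, hd⟩ : ℤ) ≤ (lam ⟨d - 1, Nat.sub_lt hd Nat.one_pos⟩ : ℤ) + L := by
      exact_mod_cast hcyl
    have hc : ((k / d + 1 : ℕ) : ℤ) = ((k / d : ℕ) : ℤ) + 1 := by push_cast; ring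
    rw [hc]
    have h3 : (L : ℤ) * (((k / d : ℕ) : ℤ) + 1) = L * ((k / d : ℕ) : ℤ) + L := by ring
    omega

def csytG (d L : ℕ) (hd : 0 < d) (lam : Fin d → ℕ) (c : ℕ) : ℕ :=
  ((range (d * ((∑ j, lam j) + 1))).filter (fun k => (c : ℤ) < csytExt d L hd lam k)).card

lemma csytG_char (d L : ℕ) (hd : 0 < d) (hL : 0 < L) (lam : Fin d → ℕ)
    (hanti : Antitone lam)
    (hcyl : lam ⟨0, hd⟩ ≤ lam ⟨d - 1, Nat.sub_lt hd Nat.one_pos⟩ + L)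
    (c k : ℕ) :
    k < csytG d L hd lam c ↔ (c : ℤ) < csytExt d L hd lam k := by
  have hfa := csytExt_anti d L hd lam hanti hcyl
  constructor
  · intro h
    by_contra hc
    push_neg at hc
    have hsub : (range (d * ((∑ j, lam j) + 1))).filter
        (fun k' => (c : ℤ) < csytExt d L hd lam k') ⊆ range k := by
      intro k' hk'
      simp only [mem_filter, mem_range] at hk' ⊢
      by_contra hk
      push_neg at hk
      exact absurd (lt_of_lt_of_le hk'.2 ((hfa hk).trans hc)) (lt_irrefl _)
    have := Finset.card_le_card hsub
    rw [Finset.card_range] at this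
    unfold csytG at h
    omega
  · intro h
    have hkN : k < d * ((∑ j, lam j) + 1) := by
      by_contra hk
      push_neg at hk
      have h1 : (∑ j, lam j) + 1 ≤ k / d := by
        rw [Nat.le_div_iff_mul_le hd]
        have : ((∑ j, lam j) + 1) * d = d * ((∑ j, lam j) + 1) := by ring
        omega
      have h2 : lam ⟨k % d, Nat.mod_lt k hd⟩ ≤ ∑ j, lam j :=
        Finset.single_le_sum (fun j _ => Nat.zero_le (lam j)) (mem_univ _)
      have h3 : ((k / d : ℕ) : ℤ) ≤ (L : ℤ) * (k / d : ℕ) :=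
        le_mul_of_one_le_left (Int.ofNat_nonneg _) (by exact_mod_cast hL)
      have h6 : csytExt d L hd lam k =
          (lam ⟨k % d, Nat.mod_lt k hd⟩ : ℤ) - (L : ℤ) * (k / d : ℕ) := rfl
      have h4 : ((k / d : ℕ) : ℤ) ≥ ((∑ j, lam j : ℕ) : ℤ) + 1 := by exact_mod_cast h1
      have h5 : ((lam ⟨k % d, Nat.mod_lt k hd⟩ : ℕ) : ℤ) ≤ ((∑ j, lam j : ℕ) : ℤ) := by
        exact_mod_cast h2
      omega
    have hsub : range (k + 1) ⊆ (range (d * ((∑ j, lam j) + 1))).filter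
        (fun k' => (c : ℤ) < csytExt d L hd lam k') := by
      intro k' hk'
      simp only [mem_range] at hk'
      simp only [mem_filter, mem_range]
      exact ⟨by omega, lt_of_lt_of_le h (hfa (by omega))⟩
    have := Finset.card_le_card hsub
    rw [Finset.card_range] at this
    unfold csytG
    omega

lemma csytG_shift (d L : ℕ) (hd : 0 < d) (hL : 0 < L) (lam : Fin d → ℕ)
    (hanti : Antitone lam)
    (hcyl : lam ⟨0, hd⟩ ≤ lam ⟨d - 1, Nat.sub_lt hd Nat.one_pos⟩ + L)
    (c : ℕ) :
    csytG d L hd lam (c + L) = csytG d L hd lam c - d := by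
  have key : ∀ x : ℕ, x < csytG d L hd lam (c + L) ↔ x < csytG d L hd lam c - d := by
    intro x
    rw [csytG_char d L hd hL lam hanti hcyl]
    have h1 : (((c + L : ℕ) : ℤ)) < csytExt d L hd lam x ↔
        (c : ℤ) < csytExt d L hd lam (x + d) := by
      rw [csytExt_add_d]
      push_cast
      omega
    have h2 : (c : ℤ) < csytExt d L hd lam (x + d) ↔ x + d < csytG d L hd lam c :=
      (csytG_char d L hd hL lam hanti hcyl c (x + d)).symm
    rw [h1, h2]
    omega
  have ha := key (csytG d L hd lam (c + L))
  have hb := key (csytG d L hd lam c - d)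
  omega

lemma csytG_shift_mul (d L : ℕ) (hd : 0 < d) (hL : 0 < L) (lam : Fin d → ℕ)
    (hanti : Antitone lam)
    (hcyl : lam ⟨0, hd⟩ ≤ lam ⟨d - 1, Nat.sub_lt hd Nat.one_pos⟩ + L)
    (c m : ℕ) :
    csytG d L hd lam (c + L * m) = csytG d L hd lam c - d * m := by
  induction m with
  | zero => simp
  | succ m ih =>
    have h1 : c + L * (m + 1) = (c + L * m) + L := by ring
    have h2 : d * (m + 1) = d * m + d := by ring
    rw [h1, csytG_shift d L hd hL lam hanti hcyl, ih]
    omega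

lemma csytP_count (L : ℕ) (hL : 0 < L) (a c : ℕ) :
    csytP L a c = ((range a).filter (fun m => c + L * m < a)).card := by
  have key : ∀ m, (c + L * m < a) ↔ m < csytP L a c := by
    intro m
    unfold csytP
    constructor
    · intro h
      have hmul : (m + 1) * L = L * m + L := by ring
      have h2 : (m + 1) * L ≤ a - c + (L - 1) := by omega
      exact (Nat.le_div_iff_mul_le hL).mpr h2
    · intro h
      have h2 : (m + 1) * L ≤ a - c + (L - 1) := (Nat.le_div_iff_mul_le hL).mp h
      have hmul : (m + 1) * L = L * m + L := by ring
      omega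
  have hset : (range a).filter (fun m => c + L * m < a) = range (csytP L a c) := by
    ext m
    simp only [mem_filter, mem_range]
    constructor
    · rintro ⟨_, h⟩
      exact (key m).mp h
    · intro h
      have h2 := (key m).mpr h
      have h3 : m ≤ L * m := Nat.le_mul_of_pos_left m hL
      exact ⟨by omega, h2⟩
  rw [hset, Finset.card_range]

lemma csytG_eq_sum (d L : ℕ) (hd : 0 < d) (hL : 0 < L) (lam : Fin d → ℕ) (c : ℕ) :
    csytG d L hd lam c = ∑ j : Fin d, csytP L (lam j) c := by
  unfold csytG
  rw [Finset.card_eq_sum_card_fiberwise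
    (f := fun k => (⟨k % d, Nat.mod_lt k hd⟩ : Fin d)) (t := univ) (fun x _ => mem_univ _)]
  apply Finset.sum_congr rfl
  intro j _
  rw [csytP_count L hL (lam j) c]
  apply Finset.card_nbij' (fun k => k / d) (fun m => (j : ℕ) + d * m)
  · -- forward membership
    intro k hk
    simp only [mem_filter, mem_range, Finset.mem_coe] at hk ⊢
    obtain ⟨⟨hkN, hQ⟩, hfib⟩ := hk
    have hmod : k % d = (j : ℕ) := by
      have := congrArg Fin.val hfib
      simpa using this
    have hEq := csytExt_eq d L hd lam k (j : ℕ) (k / d) hmod rfl j.isLt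
    rw [hEq] at hQ
    simp only [Fin.eta] at hQ
    have hcond : c + L * (k / d) < lam j := by
      have : ((c : ℤ)) + L * ((k / d : ℕ) : ℤ) < (lam j : ℤ) := by omega
      exact_mod_cast this
    have h3 : k / d ≤ L * (k / d) := Nat.le_mul_of_pos_left _ hL
    exact ⟨by omega, hcond⟩
  · -- backward membership
    intro m hm
    simp only [mem_filter, mem_range, Finset.mem_coe] at hm ⊢
    obtain ⟨hma, hcond⟩ := hm
    have hmod : ((j : ℕ) + d * m) % d = (j : ℕ) := by
      rw [Nat.add_mul_mod_self_left, Nat.mod_eq_of_lt j.isLt]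
    have hdiv : ((j : ℕ) + d * m) / d = m := by
      rw [Nat.add_mul_div_left _ _ hd, Nat.div_eq_of_lt j.isLt]
      omega
    refine ⟨⟨?_, ?_⟩, ?_⟩
    · -- in range N
      have h1 : lam j ≤ ∑ j', lam j' :=
        Finset.single_le_sum (fun j' _ => Nat.zero_le (lam j')) (mem_univ _)
      have h2 : m + 1 ≤ (∑ j', lam j') + 1 := by omega
      calc (j : ℕ) + d * m < d + d * m := by omega
        _ = d * (m + 1) := by ring
        _ ≤ d * ((∑ j', lam j') + 1) := Nat.mul_le_mul_left d h2
    · -- Q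
      have hEq := csytExt_eq d L hd lam ((j : ℕ) + d * m) (j : ℕ) m hmod hdiv j.isLt
      rw [hEq]
      simp only [Fin.eta]
      have : ((c : ℤ)) + L * (m : ℤ) < (lam j : ℤ) := by exact_mod_cast hcond
      omega
    · -- fiber
      apply Fin.ext
      simpa using hmod
  · -- left inverse
    intro k hk
    simp only [mem_filter, mem_range, Finset.mem_coe] at hk ⊢
    obtain ⟨_, hfib⟩ := hk
    have hmod : k % d = (j : ℕ) := by
      have := congrArg Fin.val hfib
      simpa using this
    have := Nat.div_add_mod k d
    omega
  · -- right inverse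
    intro m hm
    dsimp only
    rw [Nat.add_mul_div_left _ _ hd, Nat.div_eq_of_lt j.isLt]
    omega

def csytConj (d L : ℕ) (lam : Fin d → ℕ) : Fin L → ℕ :=
  fun c => ∑ j : Fin d, csytP L (lam j) (c : ℕ)

lemma csytConj_antitone (d L : ℕ) (lam : Fin d → ℕ) : Antitone (csytConj d L lam) := by
  intro c c' h
  exact Finset.sum_le_sum (fun j _ => csytP_anti L (lam j) (Fin.le_def.mp h))

lemma csytConj_zero (d L : ℕ) : csytConj d L (fun _ => 0) = fun _ => 0 := by
  funext c
  exact Finset.sum_eq_zero (fun j _ => csytP_zero L c)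

lemma csytConj_mono (d L : ℕ) {lam lam' : Fin d → ℕ} (h : ∀ j, lam j ≤ lam' j) (c : Fin L) :
    csytConj d L lam c ≤ csytConj d L lam' c :=
  Finset.sum_le_sum (fun j _ => csytP_mono L c (h j))

lemma csytConj_sum (d L : ℕ) (hL : 0 < L) (lam : Fin d → ℕ) :
    ∑ c : Fin L, csytConj d L lam c = ∑ j : Fin d, lam j := by
  unfold csytConj
  rw [Finset.sum_comm]
  apply Finset.sum_congr rfl
  intro j _
  rw [Fin.sum_univ_eq_sum_range (fun c => csytP L (lam j) c) L]
  exact csytP_hermite hL (lam j)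

lemma csytConj_cyl (d L : ℕ) (hL : 0 < L) (lam : Fin d → ℕ) :
    csytConj d L lam ⟨0, hL⟩ ≤ csytConj d L lam ⟨L - 1, Nat.sub_lt hL Nat.one_pos⟩ + d := by
  unfold csytConj
  have h1 : ∑ j : Fin d, csytP L (lam j) 0 ≤ ∑ j : Fin d, (csytP L (lam j) (L - 1) + 1) :=
    Finset.sum_le_sum (fun j _ => csytP_cyl hL (lam j))
  rw [Finset.sum_add_distrib] at h1
  simpa using h1

lemma csytConj_eq_G (d L : ℕ) (hd : 0 < d) (hL : 0 < L) (lam : Fin d → ℕ) (c : Fin L) :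
    csytConj d L lam c = csytG d L hd lam (c : ℕ) := by
  rw [csytG_eq_sum d L hd hL]
  rfl

lemma csytConj_invol (d L : ℕ) (hd : 0 < d) (hL : 0 < L) (lam : Fin d → ℕ)
    (hanti : Antitone lam)
    (hcyl : lam ⟨0, hd⟩ ≤ lam ⟨d - 1, Nat.sub_lt hd Nat.one_pos⟩ + L) :
    csytConj L d (csytConj d L lam) = lam := by
  funext j
  have hGfix : ∀ c : Fin L, csytConj d L lam c = csytG d L hd lam (c : ℕ) :=
    csytConj_eq_G d L hd hL lam
  -- rewrite as a sum over range L
  have h0 : csytConj L d (csytConj d L lam) j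
      = ∑ c ∈ range L, csytP d (csytG d L hd lam c) (j : ℕ) := by
    unfold csytConj
    rw [← Fin.sum_univ_eq_sum_range (fun c => csytP d (csytG d L hd lam c) (j : ℕ)) L]
    apply Finset.sum_congr rfl
    intro c _
    congr 1
    exact (csytG_eq_sum d L hd hL lam (c : ℕ)).symm
  rw [h0]
  -- per c: transform the count
  have hcount : ∀ c, c < L →
      csytP d (csytG d L hd lam c) (j : ℕ) = csytP L (lam j) c := by
    intro c hc
    rw [csytP_count d hd (csytG d L hd lam c) (j : ℕ),
        csytP_count L hL (lam j) c]
    -- the two filters count the same condition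
    have hiff : ∀ m : ℕ, ((j : ℕ) + d * m < csytG d L hd lam c) ↔ (c + L * m < lam j) := by
      intro m
      have h1 : ((j : ℕ) + d * m < csytG d L hd lam c) ↔
          (j : ℕ) < csytG d L hd lam c - d * m := by omega
      have h2 : csytG d L hd lam c - d * m = csytG d L hd lam (c + L * m) :=
        (csytG_shift_mul d L hd hL lam hanti hcyl c m).symm
      have h3 := csytG_char d L hd hL lam hanti hcyl (c + L * m) (j : ℕ)
      rw [csytExt_small d L hd lam j] at h3
      rw [h1, h2, h3]
      constructor
      · intro h
        exact_mod_cast h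
      · intro h
        exact_mod_cast h
    apply Finset.card_nbij' id id
    · intro m hm
      simp only [mem_filter, mem_range, id, Finset.mem_coe] at hm ⊢
      obtain ⟨hm1, hm2⟩ := hm
      have hcond := (hiff m).mp hm2
      have h3 : m ≤ L * m := Nat.le_mul_of_pos_left _ hL
      exact ⟨by omega, hcond⟩
    · intro m hm
      simp only [mem_filter, mem_range, id, Finset.mem_coe] at hm ⊢
      obtain ⟨hm1, hm2⟩ := hm
      have hcond := (hiff m).mpr hm2
      have h3 : m ≤ d * m := Nat.le_mul_of_pos_left _ hd
      exact ⟨by omega, hcond⟩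
    · intro m _; rfl
    · intro m _; rfl
  rw [Finset.sum_congr rfl (fun c hc => hcount c (mem_range.mp hc))]
  exact csytP_hermite hL (lam j)

/-- `α ≺_{(d,L)} β`: `β₁ ≥ α₁ ≥ β₂ ≥ α₂ ≥ ⋯ ≥ β_d ≥ α_d ≥ β₁ - L` (0-indexed). -/
def CylInterlace (d L : ℕ) (α β : Fin d → ℕ) : Prop :=
  (∀ i, α i ≤ β i) ∧
  (∀ i : Fin d, ∀ h : (i : ℕ) + 1 < d, β ⟨(i : ℕ) + 1, h⟩ ≤ α i) ∧
  (∀ h : 0 < d, β ⟨0, h⟩ ≤ α ⟨d - 1, Nat.sub_lt h Nat.one_pos⟩ + L)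

/-- `T` is a `(d,L)`-cylindric standard Young tableau of size `n`. -/
def IsCSYT (d L n : ℕ) (T : Fin (n + 1) → Fin d → ℕ) : Prop :=
  (∀ i, Antitone (T i)) ∧
  T 0 = (fun _ => 0) ∧
  (∀ i : Fin n, CylInterlace d L (T i.castSucc) (T i.succ)) ∧
  (∀ i : Fin (n + 1), ∑ j, T i j = (i : ℕ))

/-- A cylindric partition: first part at most last part plus L. -/
def CylPart (d L : ℕ) (lam : Fin d → ℕ) : Prop :=
  ∀ h : 0 < d, lam ⟨0, h⟩ ≤ lam ⟨d - 1, Nat.sub_lt h Nat.one_pos⟩ + L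

lemma step_interlace (d L : ℕ) (hd : 0 < d) (hL : 0 < L) (α β : Fin d → ℕ)
    (hαa : Antitone α) (hβa : Antitone β) (hαc : CylPart d L α) (hβc : CylPart d L β)
    (hle : ∀ j, α j ≤ β j) (hsum : ∑ j, β j = (∑ j, α j) + 1) :
    CylInterlace d L α β := by
  classical
  -- find the unique box
  obtain ⟨j₀, hj₀⟩ : ∃ j₀, α j₀ < β j₀ := by
    by_contra h
    push_neg at h
    have := Finset.sum_le_sum (fun j (_ : j ∈ Finset.univ) => h j)
    omega
  have hother : ∀ j, j ≠ j₀ → β j = α j := by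
    intro j hj
    by_contra hne
    have h1 : α j < β j := lt_of_le_of_ne (hle j) (Ne.symm hne)
    have hj₀mem : j₀ ∈ (Finset.univ : Finset (Fin d)).erase j :=
      Finset.mem_erase.mpr ⟨Ne.symm hj, Finset.mem_univ _⟩
    have e1 : ∑ x ∈ Finset.univ.erase j, β x ≥ ∑ x ∈ Finset.univ.erase j, α x + 1 := by
      have h3 : ∑ x ∈ (Finset.univ.erase j).erase j₀, α x ≤
          ∑ x ∈ (Finset.univ.erase j).erase j₀, β x :=
        Finset.sum_le_sum (fun x _ => hle x)
      have e2 := Finset.add_sum_erase _ β hj₀mem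
      have e3 := Finset.add_sum_erase _ α hj₀mem
      omega
    have e4 := Finset.add_sum_erase _ β (Finset.mem_univ j)
    have e5 := Finset.add_sum_erase _ α (Finset.mem_univ j)
    omega
  have hrest : ∑ x ∈ Finset.univ.erase j₀, β x = ∑ x ∈ Finset.univ.erase j₀, α x :=
    Finset.sum_congr rfl (fun x hx => hother x (Finset.mem_erase.mp hx).1)
  have hbox : β j₀ = α j₀ + 1 := by
    have e4 := Finset.add_sum_erase _ β (Finset.mem_univ j₀)
    have e5 := Finset.add_sum_erase _ α (Finset.mem_univ j₀)
    omega
  refine ⟨hle, ?_, ?_⟩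
  · intro i h
    set i' : Fin d := ⟨(i : ℕ) + 1, h⟩ with hi'
    have hii' : i ≤ i' := by simp [Fin.le_def, hi']
    by_cases hc : i' = j₀
    · have hne : i ≠ j₀ := by
        rw [← hc]
        intro hcc
        have := congrArg Fin.val hcc
        simp [hi'] at this
      have h1 : β i = α i := hother i hne
      have h2 : β i' ≤ β i := hβa hii'
      omega
    · have h1 : β i' = α i' := hother i' hc
      have h2 : α i' ≤ α i := hαa hii'
      omega
  · intro h
    by_cases hcw : (⟨d - 1, Nat.sub_lt h Nat.one_pos⟩ : Fin d) = j₀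
    · by_cases hcz : (⟨0, h⟩ : Fin d) = j₀
      · have h1 : β ⟨0, h⟩ = α ⟨0, h⟩ + 1 := by rw [hcz]; exact hbox
        have h2 : α (⟨0, h⟩ : Fin d) = α ⟨d - 1, Nat.sub_lt h Nat.one_pos⟩ :=
          congrArg α (hcz.trans hcw.symm)
        omega
      · have h1 : β ⟨0, h⟩ = α ⟨0, h⟩ := hother _ hcz
        have h2 := hαc h
        omega
    · have h1 : β ⟨d - 1, Nat.sub_lt h Nat.one_pos⟩ = α ⟨d - 1, Nat.sub_lt h Nat.one_pos⟩ :=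
        hother _ hcw
      have h2 := hβc h
      omega

lemma isCSYT_cylpart (d L n : ℕ) (T : Fin (n + 1) → Fin d → ℕ) (hT : IsCSYT d L n T) :
    ∀ i, CylPart d L (T i) := by
  intro i
  induction i using Fin.cases with
  | zero =>
    intro h
    rw [hT.2.1]
    simp
  | succ i =>
    intro h
    obtain ⟨h1, h2, h3⟩ := hT.2.2.1 i
    exact le_trans (h3 h) (Nat.add_le_add_right (h1 _) L)

lemma conj_isCSYT (d L n : ℕ) (hd : 0 < d) (hL : 0 < L)
    (T : Fin (n + 1) → Fin d → ℕ) (hT : IsCSYT d L n T) :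
    IsCSYT L d n (fun i => csytConj d L (T i)) := by
  obtain ⟨hanti, hzero, hstep, hsum⟩ := hT
  have hcylp := isCSYT_cylpart d L n T ⟨hanti, hzero, hstep, hsum⟩
  refine ⟨?_, ?_, ?_, ?_⟩
  · intro i
    exact csytConj_antitone d L (T i)
  · simp only
    rw [hzero, csytConj_zero]
  · intro i
    apply step_interlace L d hL hd
    · exact csytConj_antitone d L (T i.castSucc)
    · exact csytConj_antitone d L (T i.succ)
    · intro h
      exact csytConj_cyl d L h (T i.castSucc)
    · intro h
      exact csytConj_cyl d L h (T i.succ)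
    · intro c
      exact csytConj_mono d L ((hstep i).1) c
    · rw [csytConj_sum d L hL, csytConj_sum d L hL, hsum, hsum, Fin.val_succ,
        Fin.coe_castSucc]
  · intro i
    rw [csytConj_sum d L hL, hsum]

lemma conj_conj_T (d L n : ℕ) (hd : 0 < d) (hL : 0 < L)
    (T : Fin (n + 1) → Fin d → ℕ) (hT : IsCSYT d L n T) :
    (fun i => csytConj L d (csytConj d L (T i))) = T := by
  funext i
  exact csytConj_invol d L hd hL (T i) (hT.1 i) (isCSYT_cylpart d L n T hT i hd)

/-- The number of `(d,L)`-cylindric standard Young tableaux of size `n` equals the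
number of `(L,d)`-cylindric standard Young tableaux of size `n`. -/
theorem card_CSYT_symm (n d L : ℕ) (hn : 0 < n) (hd : 0 < d) (hL : 0 < L) :
    Nat.card {T : Fin (n + 1) → Fin d → ℕ // IsCSYT d L n T} =
    Nat.card {T : Fin (n + 1) → Fin L → ℕ // IsCSYT L d n T} := by
  apply Nat.card_congr
  exact {
    toFun := fun T => ⟨fun i => csytConj d L (T.1 i), conj_isCSYT d L n hd hL T.1 T.2⟩
    invFun := fun T => ⟨fun i => csytConj L d (T.1 i), conj_isCSYT L d n hL hd T.1 T.2⟩
    left_inv := fun T => Subtype.ext (conj_conj_T d L n hd hL T.1 T.2)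
    right_inv := fun T => Subtype.ext (conj_conj_T L d n hL hd T.1 T.2) }
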